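/- Peierls inequality: let f : ℝ → ℝ be convex, A an n×n Hermitian matrix, and {u_1,…,u_n} any orthonormal basis of ℂⁿ. Then ∑_{i=1}^n f(⟨u_i, A u_i⟩) ≤ tr f(A), where f(A) is defined via the spectral functional calculus. -/

import Mathlib

open Matrix
open scoped ComplexOrder

/-- Spectral functional calculus for Hermitian matrices (junk value `0` otherwise). -/
noncomputable def matFun {d : ℕ} (f : ℝ → ℝ) (A : Matrix (Fin d) (Fin d) ℂ) :
    Matrix (Fin d) (Fin d) ℂ :=
  if hA : A.IsHermitian then
    (hA.eigenvectorUnitary : Matrix (Fin d) (Fin d) ℂ) *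
      Matrix.diagonal (fun i => (f (hA.eigenvalues i) : ℂ)) *
      (hA.eigenvectorUnitary : Matrix (Fin d) (Fin d) ℂ)ᴴ
  else 0

lemma toEuclideanCLM_eigen {n : ℕ} (A : Matrix (Fin n) (Fin n) ℂ) (hA : A.IsHermitian) (j : Fin n) :
    Matrix.toEuclideanCLM (𝕜 := ℂ) A (hA.eigenvectorBasis j)
      = (hA.eigenvalues j : ℂ) • hA.eigenvectorBasis j := by
  have h2 := Matrix.ofLp_toEuclideanCLM (n := Fin n) (𝕜 := ℂ) A (hA.eigenvectorBasis j)
  apply WithLp.ofLp_injective 2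
  rw [h2]
  simpa using hA.mulVec_eigenvectorBasis j

lemma inner_toEuclideanCLM {n : ℕ} (A : Matrix (Fin n) (Fin n) ℂ) (hA : A.IsHermitian)
    (x : EuclideanSpace ℂ (Fin n)) :
    (inner ℂ x (Matrix.toEuclideanCLM (𝕜 := ℂ) A x) : ℂ)
      = ∑ j, (hA.eigenvalues j : ℂ) * (‖hA.eigenvectorBasis.repr x j‖ ^ 2 : ℝ) := by
  set T := Matrix.toEuclideanCLM (𝕜 := ℂ) A
  set v := hA.eigenvectorBasis
  have hsa : _root_.IsSelfAdjoint T := by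
    rw [_root_.IsSelfAdjoint, ← map_star]
    congr 1
  have hj : ∀ j, (inner ℂ (v j) (T x) : ℂ) = (hA.eigenvalues j : ℂ) * inner ℂ (v j) x := by
    intro j
    rw [← ContinuousLinearMap.adjoint_inner_left, ← ContinuousLinearMap.star_eq_adjoint,
      hsa.star_eq, toEuclideanCLM_eigen A hA j, inner_smul_left, Complex.conj_ofReal]
  rw [← OrthonormalBasis.sum_inner_mul_inner v x (T x)]
  refine Finset.sum_congr rfl fun j _ => ?_
  rw [hj j, OrthonormalBasis.repr_apply_apply,
    show (inner ℂ x (v j) : ℂ) = (starRingEnd ℂ) (inner ℂ (v j) x) from (inner_conj_symm x (v j)).symm]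
  set z : ℂ := inner ℂ (v j) x
  push_cast
  rw [show ((‖z‖:ℂ)^2) = z * (starRingEnd ℂ) z from (Complex.mul_conj' z).symm]
  ring

/-- Peierls inequality. -/
theorem peierls {n : ℕ} (f : ℝ → ℝ) (hf : ConvexOn ℝ Set.univ f)
    (A : Matrix (Fin n) (Fin n) ℂ) (hA : A.IsHermitian)
    (b : OrthonormalBasis (Fin n) ℂ (EuclideanSpace ℂ (Fin n))) :
    ∑ i, f (inner ℂ (b i) (Matrix.toEuclideanCLM (𝕜 := ℂ) A (b i)) : ℂ).re
      ≤ (matFun f A).trace.re := by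
  set v := hA.eigenvectorBasis with hv
  set μ := hA.eigenvalues with hμ
  set w : Fin n → Fin n → ℝ := fun i j => ‖v.repr (b i) j‖ ^ 2 with hw
  have hw0 : ∀ i j, 0 ≤ w i j := fun i j => sq_nonneg _
  -- rows sum to 1
  have hrow : ∀ i, ∑ j, w i j = 1 := by
    intro i
    have h1 : ‖v.repr (b i)‖ ^ 2 = ∑ j, ‖v.repr (b i) j‖ ^ 2 :=
      PiLp.norm_sq_eq_of_L2 _ _
    have h2 : ‖v.repr (b i)‖ = 1 := by
      rw [LinearIsometryEquiv.norm_map]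
      exact b.orthonormal.1 i
    simp only [hw]
    rw [← h1, h2, one_pow]
  -- columns sum to 1
  have hcol : ∀ j, ∑ i, w i j = 1 := by
    intro j
    have hrepr : ∀ i, ‖v.repr (b i) j‖ = ‖b.repr (v j) i‖ := by
      intro i
      rw [OrthonormalBasis.repr_apply_apply, OrthonormalBasis.repr_apply_apply,
        ← inner_conj_symm (b i) (v j), RCLike.norm_conj]
    have h1 : ‖b.repr (v j)‖ ^ 2 = ∑ i, ‖b.repr (v j) i‖ ^ 2 :=
      PiLp.norm_sq_eq_of_L2 _ _
    have h2 : ‖b.repr (v j)‖ = 1 := by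
      rw [LinearIsometryEquiv.norm_map]
      exact v.orthonormal.1 j
    calc ∑ i, w i j = ∑ i, ‖b.repr (v j) i‖ ^ 2 := by
          refine Finset.sum_congr rfl fun i _ => ?_
          simp only [hw, hrepr i]
      _ = 1 := by rw [← h1, h2]; norm_num
  -- the diagonal inner products
  have key : ∀ i, (inner ℂ (b i) (Matrix.toEuclideanCLM (𝕜 := ℂ) A (b i)) : ℂ).re
      = ∑ j, w i j • μ j := by
    intro i
    rw [inner_toEuclideanCLM A hA (b i)]
    rw [Complex.re_sum]
    refine Finset.sum_congr rfl fun j _ => ?_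
    rw [← Complex.ofReal_mul, Complex.ofReal_re]
    simp [hw, hv, hμ, smul_eq_mul, mul_comm]
  -- trace of matFun
  have htr : (matFun f A).trace.re = ∑ j, f (μ j) := by
    rw [matFun, dif_pos hA]
    rw [trace_mul_cycle]
    have hU : (hA.eigenvectorUnitary : Matrix (Fin n) (Fin n) ℂ)ᴴ *
        (hA.eigenvectorUnitary : Matrix (Fin n) (Fin n) ℂ) = 1 := by
      simpa [star_eq_conjTranspose] using
        (Unitary.star_mul_self_of_mem hA.eigenvectorUnitary.2)
    rw [hU, one_mul, trace_diagonal, Complex.re_sum]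
    simp [hμ]
  rw [htr]
  calc ∑ i, f (inner ℂ (b i) (Matrix.toEuclideanCLM (𝕜 := ℂ) A (b i)) : ℂ).re
      = ∑ i, f (∑ j, w i j • μ j) := by
        refine Finset.sum_congr rfl fun i _ => ?_
        rw [key i]
    _ ≤ ∑ i, ∑ j, w i j * f (μ j) := by
        refine Finset.sum_le_sum fun i _ => ?_
        exact hf.map_sum_le (fun j _ => hw0 i j) (hrow i) (fun j _ => Set.mem_univ _)
    _ = ∑ j, (∑ i, w i j) * f (μ j) := by
        rw [Finset.sum_comm]
        simp [Finset.sum_mul]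
    _ = ∑ j, f (μ j) := by
        refine Finset.sum_congr rfl fun j _ => ?_
        rw [hcol j, one_mul]
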